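/- Let G be a connected nontrivial simple graph with m vertices and let n ≥ 4. Then the restricted edge-connectivity of the strong product G ⊠ K_n of G with the complete graph K_n on n vertices equals min{n²·λ(G), (n−1)·(m + 2·e(G)), 2n·δ(G) + 2n − 4}. -/

import Mathlib

/-- The strong product of two simple graphs. -/
def strongProd {α β : Type*} (G : SimpleGraph α) (H : SimpleGraph β) :
    SimpleGraph (α × β) where
  Adj x y := (x.1 = y.1 ∧ H.Adj x.2 y.2) ∨ (x.2 = y.2 ∧ G.Adj x.1 y.1) ∨
    (G.Adj x.1 y.1 ∧ H.Adj x.2 y.2)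
  symm := by
    constructor
    rintro ⟨a₁, a₂⟩ ⟨b₁, b₂⟩ (⟨h1, h2⟩ | ⟨h1, h2⟩ | ⟨h1, h2⟩)
    · exact Or.inl ⟨h1.symm, h2.symm⟩
    · exact Or.inr (Or.inl ⟨h1.symm, h2.symm⟩)
    · exact Or.inr (Or.inr ⟨h1.symm, h2.symm⟩)
  loopless := by
    constructor
    rintro ⟨a₁, a₂⟩ (⟨_, h⟩ | ⟨_, h⟩ | ⟨h, _⟩)
    · exact H.irrefl h
    · exact G.irrefl h
    · exact G.irrefl h

/-- The degree of a vertex. -/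
noncomputable def deg {α : Type*} (G : SimpleGraph α) (v : α) : ℕ := (G.neighborSet v).ncard

/-- The minimum degree `δ(G)`. -/
noncomputable def minDeg {α : Type*} (G : SimpleGraph α) : ℕ := sInf {d | ∃ v, d = deg G v}

/-- The number of edges `e(G)`. -/
noncomputable def numEdges {α : Type*} (G : SimpleGraph α) : ℕ := G.edgeSet.ncard

/-- The minimum edge-degree `ξ(G) = min {d(u) + d(v) - 2 : uv ∈ E(G)}`. -/
noncomputable def minEdgeDeg {α : Type*} (G : SimpleGraph α) : ℕ :=
  sInf {d | ∃ u v, G.Adj u v ∧ d = deg G u + deg G v - 2}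

/-- The edge-connectivity `λ(G)`. -/
noncomputable def edgeConn {α : Type*} (G : SimpleGraph α) : ℕ :=
  sInf {k | ∃ S : Set (Sym2 α), S ⊆ G.edgeSet ∧ S.ncard = k ∧
    ¬ (G.deleteEdges S).Connected}

/-- `S` is a restricted edge-cut of `G`: deleting `S` disconnects `G` and every
component of `G - S` has at least two vertices. -/
def IsRestrictedEdgeCut {α : Type*} (G : SimpleGraph α) (S : Set (Sym2 α)) : Prop :=
  S ⊆ G.edgeSet ∧ ¬ (G.deleteEdges S).Connected ∧
    ∀ v : α, 2 ≤ ((G.deleteEdges S).connectedComponentMk v).supp.ncard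

/-- The restricted edge-connectivity `λ'(G)`. -/
noncomputable def restEdgeConn {α : Type*} (G : SimpleGraph α) : ℕ :=
  sInf {k | ∃ S : Set (Sym2 α), IsRestrictedEdgeCut G S ∧ S.ncard = k}

/-- `G` is super restricted edge-connected: every minimum restricted edge-cut
isolates an edge, i.e. some component of `G - S` has exactly two vertices. -/
def SuperRestrictedEdgeConnected {α : Type*} (G : SimpleGraph α) : Prop :=
  ∀ S : Set (Sym2 α), IsRestrictedEdgeCut G S → S.ncard = restEdgeConn G →
    ∃ v : α, ((G.deleteEdges S).connectedComponentMk v).supp.ncard = 2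

/-- The set `[X, Y]_G` of edges of `G` with one end in `X` and the other in `Y`. -/
def edgesBetween {α : Type*} (G : SimpleGraph α) (X Y : Set α) : Set (Sym2 α) :=
  {e | e ∈ G.edgeSet ∧ ∃ u ∈ X, ∃ v ∈ Y, e = s(u, v)}

open SimpleGraph Finset
open scoped Classical
set_option maxHeartbeats 1600000
set_option linter.unusedSectionVars false

namespace REC

variable {α : Type*}

lemma reachable_pred_iff {H : SimpleGraph α} {p : α → Prop}
    (hp : ∀ u v, H.Adj u v → (p u ↔ p v)) {u v : α} (h : H.Reachable u v) : p u ↔ p v := by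
  obtain ⟨w⟩ := h
  induction w with
  | nil => rfl
  | cons h q ih => exact (hp _ _ h).trans ih

lemma edgesBetween_subset (H : SimpleGraph α) (X Y : Set α) :
    edgesBetween H X Y ⊆ H.edgeSet := fun _ he => he.1

lemma mem_iff_of_adj_del {H : SimpleGraph α} {X : Set α} {u v : α}
    (h : (H.deleteEdges (edgesBetween H X Xᶜ)).Adj u v) : u ∈ X ↔ v ∈ X := by
  rw [SimpleGraph.deleteEdges_adj] at h
  obtain ⟨hadj, hne⟩ := h
  constructor
  · intro hu; by_contra hv
    exact hne ⟨H.mem_edgeSet.2 hadj, u, hu, v, hv, rfl⟩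
  · intro hv; by_contra hu
    exact hne ⟨H.mem_edgeSet.2 hadj, v, hv, u, hu, Sym2.eq_swap⟩

lemma reach_mem_iff {H : SimpleGraph α} {X : Set α} {u v : α}
    (h : (H.deleteEdges (edgesBetween H X Xᶜ)).Reachable u v) : u ∈ X ↔ v ∈ X :=
  reachable_pred_iff (fun _ _ hab => mem_iff_of_adj_del hab) h

lemma not_connected_del_edgesBetween {H : SimpleGraph α} {X : Set α}
    (hX : X.Nonempty) (hX' : Xᶜ.Nonempty) :
    ¬ (H.deleteEdges (edgesBetween H X Xᶜ)).Connected := by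
  obtain ⟨u, hu⟩ := hX; obtain ⟨v, hv⟩ := hX'
  intro hc
  exact hv ((reach_mem_iff (hc.preconnected u v)).mp hu)

lemma ncard_edgesBetween_compl (H : SimpleGraph α) [Fintype α] (X : Set α) :
    (edgesBetween H X Xᶜ).ncard =
      (Finset.univ.filter fun p : α × α => p.1 ∈ X ∧ p.2 ∉ X ∧ H.Adj p.1 p.2).card := by
  have hset : edgesBetween H X Xᶜ =
      ↑((Finset.univ.filter fun p : α × α => p.1 ∈ X ∧ p.2 ∉ X ∧ H.Adj p.1 p.2).image
        fun p => s(p.1, p.2)) := by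
    ext e
    simp only [Finset.coe_image, Set.mem_image, Finset.mem_coe, Finset.mem_filter,
      Finset.mem_univ, true_and]
    constructor
    · rintro ⟨heS, u, hu, v, hv, rfl⟩
      exact ⟨(u, v), ⟨hu, hv, H.mem_edgeSet.1 heS⟩, rfl⟩
    · rintro ⟨⟨u, v⟩, ⟨hu, hv, hadj⟩, rfl⟩
      exact ⟨H.mem_edgeSet.2 hadj, u, hu, v, hv, rfl⟩
  rw [hset, Set.ncard_coe_finset, Finset.card_image_of_injOn]
  rintro ⟨u, v⟩ hp ⟨u', v'⟩ hq he
  simp only [Finset.mem_coe, Finset.mem_filter, Finset.mem_univ, true_and] at hp hq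
  simp only [Sym2.eq_iff] at he
  rcases he with ⟨h1, h2⟩ | ⟨h1, h2⟩
  · simp [h1, h2]
  · exact absurd (h1 ▸ hp.1) hq.2.1

lemma edgeConn_le_ncard_edgesBetween {H : SimpleGraph α} {X : Set α}
    (hX : X.Nonempty) (hX' : Xᶜ.Nonempty) :
    edgeConn H ≤ (edgesBetween H X Xᶜ).ncard :=
  Nat.sInf_le ⟨_, edgesBetween_subset H X Xᶜ, rfl, not_connected_del_edgesBetween hX hX'⟩

lemma minDeg_le (G : SimpleGraph α) (v : α) : minDeg G ≤ deg G v :=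
  Nat.sInf_le ⟨v, rfl⟩

lemma deg_eq_degree (G : SimpleGraph α) [Fintype α] [DecidableRel G.Adj] (v : α) :
    deg G v = G.degree v := by
  rw [deg, SimpleGraph.degree, neighborFinset, Set.ncard_eq_toFinset_card']

lemma numEdges_eq (G : SimpleGraph α) [Fintype α] [DecidableRel G.Adj] :
    numEdges G = G.edgeFinset.card := by
  rw [numEdges, edgeFinset, Set.ncard_eq_toFinset_card']

lemma two_le_ncard_supp {H : SimpleGraph α} [Fintype α] {u w : α} (h : H.Adj u w) :
    2 ≤ (H.connectedComponentMk u).supp.ncard := by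
  have hu : u ∈ (H.connectedComponentMk u).supp := (ConnectedComponent.mem_supp_iff _ _).2 rfl
  have hw : w ∈ (H.connectedComponentMk u).supp :=
    (ConnectedComponent.mem_supp_iff _ _).2 (ConnectedComponent.sound h.symm.reachable)
  have : 1 < (H.connectedComponentMk u).supp.ncard :=
    (Set.one_lt_ncard_iff (Set.toFinite _)).2 ⟨u, w, hu, hw, h.ne⟩
  omega

lemma exists_adj_of_two_le_supp {H : SimpleGraph α} [Fintype α] {u : α}
    (h : 2 ≤ (H.connectedComponentMk u).supp.ncard) : ∃ w, H.Adj u w := by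
  have h1 : 1 < (H.connectedComponentMk u).supp.ncard := h
  rw [Set.one_lt_ncard_iff (Set.toFinite _)] at h1
  obtain ⟨a, b, ha, hb, hab⟩ := h1
  have key : ∀ w, w ∈ (H.connectedComponentMk u).supp → w ≠ u → ∃ w', H.Adj u w' := by
    intro w hw hwu
    have hr : H.Reachable u w :=
      (ConnectedComponent.exact ((ConnectedComponent.mem_supp_iff _ _).1 hw)).symm
    obtain ⟨p⟩ := hr
    cases p with
    | nil => exact absurd rfl hwu.symm
    | cons hadj _ => exact ⟨_, hadj⟩
  rcases eq_or_ne a u with rfl | hau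
  · exact key b hb (fun hbu => hab hbu.symm)
  · exact key a ha hau

end REC

namespace REC

section Prod
variable {V : Type*} [Fintype V] {n : ℕ} (G : SimpleGraph V)

lemma adjP {u v : V × Fin n} :
    (strongProd G (completeGraph (Fin n))).Adj u v ↔
      ((u.1 = v.1 ∧ u.2 ≠ v.2) ∨ G.Adj u.1 v.1) := by
  constructor
  · rintro (⟨h1, h2⟩ | ⟨h1, h2⟩ | ⟨h1, h2⟩)
    · exact Or.inl ⟨h1, h2⟩
    · exact Or.inr h2
    · exact Or.inr h1
  · rintro (⟨h1, h2⟩ | h)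
    · exact Or.inl ⟨h1, h2⟩
    · rcases eq_or_ne u.2 v.2 with h2 | h2
      · exact Or.inr (Or.inl ⟨h2, h⟩)
      · exact Or.inr (Or.inr ⟨h, h2⟩)

/-- fiber count of a vertex subset of the product -/
noncomputable def fib (X : Set (V × Fin n)) (x : V) : ℕ :=
  (Finset.univ.filter fun i : Fin n => (x, i) ∈ X).card

lemma fib_le (X : Set (V × Fin n)) (x : V) : fib X x ≤ n := by
  simpa [fib] using Finset.card_filter_le Finset.univ (fun i : Fin n => (x, i) ∈ X)

/-- the summand function -/
noncomputable def kf (G : SimpleGraph V) (n : ℕ) (a : V → ℕ) (x y : V) : ℕ :=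
  if x = y then a x * (n - a x) else if G.Adj x y then a x * (n - a y) else 0

lemma sum_ite_and {p q : Fin n → Prop} :
    (∑ i : Fin n, ∑ j : Fin n, if p i ∧ q j then (1 : ℕ) else 0) =
      (Finset.univ.filter p).card * (Finset.univ.filter q).card := by
  rw [Finset.card_filter, Finset.card_filter, Finset.sum_mul_sum]
  congr 1; ext i; congr 1; ext j
  by_cases hp : p i <;> by_cases hq : q j <;> simp [hp, hq]

lemma card_filter_not_mem (X : Set (V × Fin n)) (x : V) :
    (Finset.univ.filter fun j : Fin n => (x, j) ∉ X).card = n - fib X x := by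
  have h : (Finset.univ.filter fun j : Fin n => (x, j) ∈ X).card
      + (Finset.univ.filter fun j : Fin n => (x, j) ∉ X).card = n := by
    rw [Finset.card_filter_add_card_filter_not, Finset.card_univ, Fintype.card_fin]
  unfold fib
  omega

lemma card_pairs_eq (X : Set (V × Fin n)) :
    (Finset.univ.filter fun p : (V × Fin n) × (V × Fin n) =>
        p.1 ∈ X ∧ p.2 ∉ X ∧ (strongProd G (completeGraph (Fin n))).Adj p.1 p.2).card
      = ∑ x : V, ∑ y : V, kf G n (fib X) x y := by
  rw [Finset.card_filter]
  rw [Fintype.sum_prod_type]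
  have step : ∀ u : V × Fin n, (∑ w : V × Fin n,
      if u ∈ X ∧ w ∉ X ∧ (strongProd G (completeGraph (Fin n))).Adj u w then (1:ℕ) else 0)
      = ∑ y : V, ∑ j : Fin n,
        if u ∈ X ∧ (y, j) ∉ X ∧ (strongProd G (completeGraph (Fin n))).Adj u (y, j) then (1:ℕ) else 0 := by
    intro u; rw [Fintype.sum_prod_type]
  simp only [step]
  rw [Fintype.sum_prod_type]
  congr 1; ext x
  rw [Finset.sum_comm]
  congr 1; ext y
  by_cases hxy : x = y
  · subst hxy
    have hterm : ∀ i j : Fin n,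
        (if ((x, i) ∈ X ∧ (x, j) ∉ X ∧ (strongProd G (completeGraph (Fin n))).Adj (x, i) (x, j))
          then (1:ℕ) else 0)
        = (if (x, i) ∈ X then (1:ℕ) else 0) * (if (x, j) ∉ X then (1:ℕ) else 0) := by
      intro i j
      by_cases h1 : (x, i) ∈ X
      · by_cases h2 : (x, j) ∉ X
        · have hij : i ≠ j := by rintro rfl; exact h2 h1
          rw [if_pos ⟨h1, h2, (adjP G).2 (Or.inl ⟨rfl, hij⟩)⟩, if_pos h1, if_pos h2, mul_one]
        · rw [if_neg (fun h => h2 h.2.1), if_neg h2, mul_zero]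
      · rw [if_neg (fun h => h1 h.1), if_neg h1, zero_mul]
    simp only [hterm, ← Finset.sum_mul_sum]
    rw [← Finset.card_filter, ← Finset.card_filter]
    rw [card_filter_not_mem]
    simp [kf, fib]
  · by_cases hadj : G.Adj x y
    · have hterm : ∀ i j : Fin n,
          (if ((x, i) ∈ X ∧ (y, j) ∉ X ∧ (strongProd G (completeGraph (Fin n))).Adj (x, i) (y, j))
            then (1:ℕ) else 0)
          = (if (x, i) ∈ X then (1:ℕ) else 0) * (if (y, j) ∉ X then (1:ℕ) else 0) := by
        intro i j
        by_cases h1 : (x, i) ∈ X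
        · by_cases h2 : (y, j) ∉ X
          · rw [if_pos ⟨h1, h2, (adjP G).2 (Or.inr hadj)⟩, if_pos h1, if_pos h2, mul_one]
          · rw [if_neg (fun h => h2 h.2.1), if_neg h2, mul_zero]
        · rw [if_neg (fun h => h1 h.1), if_neg h1, zero_mul]
      simp only [hterm, ← Finset.sum_mul_sum]
      rw [← Finset.card_filter, ← Finset.card_filter]
      rw [card_filter_not_mem]
      simp [kf, fib, hxy, hadj]
    · have hterm : ∀ i j : Fin n,
          (if ((x, i) ∈ X ∧ (y, j) ∉ X ∧ (strongProd G (completeGraph (Fin n))).Adj (x, i) (y, j))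
            then (1:ℕ) else 0) = 0 := by
        intro i j
        rw [if_neg]
        rintro ⟨_, _, hA⟩
        rcases (adjP G).1 hA with ⟨h1, _⟩ | h
        · exact hxy h1
        · exact hadj h
      simp only [hterm, Finset.sum_const_zero]
      simp [kf, hxy, hadj]

lemma fib_pos {X : Set (V × Fin n)} {x : V} {i : Fin n} (h : (x, i) ∈ X) : 1 ≤ fib X x :=
  Finset.card_pos.2 ⟨i, Finset.mem_filter.2 ⟨Finset.mem_univ _, h⟩⟩

lemma exists_mem_of_fib_pos {X : Set (V × Fin n)} {x : V} (h : 1 ≤ fib X x) :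
    ∃ i, (x, i) ∈ X := by
  obtain ⟨i, hi⟩ := Finset.card_pos.1 h
  exact ⟨i, (Finset.mem_filter.1 hi).2⟩

lemma fib_two_le {X : Set (V × Fin n)} {x : V} {i j : Fin n} (hi : (x, i) ∈ X)
    (hj : (x, j) ∈ X) (hij : i ≠ j) : 2 ≤ fib X x :=
  Finset.one_lt_card.2 ⟨i, Finset.mem_filter.2 ⟨Finset.mem_univ _, hi⟩,
    j, Finset.mem_filter.2 ⟨Finset.mem_univ _, hj⟩, hij⟩

lemma mem_of_fib_eq {X : Set (V × Fin n)} {x : V} (h : fib X x = n) (i : Fin n) :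
    (x, i) ∈ X := by
  have huniv : (Finset.univ.filter fun j : Fin n => (x, j) ∈ X) = Finset.univ :=
    Finset.eq_univ_of_card _ (by rw [← fib, h, Fintype.card_fin])
  have : i ∈ (Finset.univ.filter fun j : Fin n => (x, j) ∈ X) := by
    rw [huniv]; exact Finset.mem_univ _
  exact (Finset.mem_filter.1 this).2

lemma exists_not_mem_of_fib_lt {X : Set (V × Fin n)} {x : V} (h : fib X x < n) :
    ∃ i, (x, i) ∉ X := by
  by_contra hall
  push_neg at hall
  have huniv : (Finset.univ.filter fun j : Fin n => (x, j) ∈ X) = Finset.univ := by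
    ext j
    exact ⟨fun _ => Finset.mem_univ _,
      fun _ => Finset.mem_filter.2 ⟨Finset.mem_univ _, hall j⟩⟩
  have : fib X x = n := by rw [fib, huniv, Finset.card_univ, Fintype.card_fin]
  omega

lemma fib_add_two_le {X : Set (V × Fin n)} {x : V} {i j : Fin n} (hi : (x, i) ∉ X)
    (hj : (x, j) ∉ X) (hij : i ≠ j) : fib X x + 2 ≤ n := by
  have h2 : 2 ≤ (Finset.univ.filter fun j : Fin n => (x, j) ∉ X).card :=
    Finset.one_lt_card.2 ⟨i, Finset.mem_filter.2 ⟨Finset.mem_univ _, hi⟩,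
      j, Finset.mem_filter.2 ⟨Finset.mem_univ _, hj⟩, hij⟩
  have := card_filter_not_mem X x
  have := fib_le X x
  omega

lemma ncard_EB (G : SimpleGraph V) (X : Set (V × Fin n)) :
    (edgesBetween (strongProd G (completeGraph (Fin n))) X Xᶜ).ncard
      = ∑ x : V, ∑ y : V, kf G n (fib X) x y :=
  (ncard_edgesBetween_compl _ X).trans (card_pairs_eq G X)

end Prod
end REC

namespace REC
lemma nat_prod_lb1 {a b : ℕ} (ha : 1 ≤ a) (hb : 1 ≤ b) : a + b ≤ a * b + 1 := by
  obtain ⟨a', rfl⟩ := Nat.exists_eq_add_of_le ha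
  obtain ⟨b', rfl⟩ := Nat.exists_eq_add_of_le hb
  nlinarith

lemma nat_prod_lb2 {a b : ℕ} (ha : 2 ≤ a) (hb : 2 ≤ b) : 2 * a + 2 * b ≤ a * b + 4 := by
  obtain ⟨a', rfl⟩ := Nat.exists_eq_add_of_le ha
  obtain ⟨b', rfl⟩ := Nat.exists_eq_add_of_le hb
  nlinarith

lemma pair_ge_n {n a c : ℕ} (ha1 : 1 ≤ a) (ha2 : a < n) (hc : c ≤ n) :
    n ≤ a * (n - c) + c * (n - a) := by
  rcases Nat.eq_zero_or_pos c with rfl | hc1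
  · have : n ≤ a * n := Nat.le_mul_of_pos_left n ha1
    simpa using this
  · rcases eq_or_lt_of_le hc with rfl | hcn
    · have h1 : 1 ≤ c - a := by omega
      have : c ≤ c * (c - a) := Nat.le_mul_of_pos_right c (by omega)
      simpa using this
    · have t1 : n - c ≤ a * (n - c) := Nat.le_mul_of_pos_left _ ha1
      have t2 : c ≤ c * (n - a) := Nat.le_mul_of_pos_right _ (by omega)
      omega

lemma pair_ge_2n2 {n a c : ℕ} (ha1 : 1 ≤ a) (ha2 : a < n) (hc1 : 1 ≤ c) (hc2 : c < n) :
    2 * n - 2 ≤ a * (n - c) + c * (n - a) := by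
  have l1 := nat_prod_lb1 ha1 (show 1 ≤ n - c by omega)
  have l2 := nat_prod_lb1 hc1 (show 1 ≤ n - a by omega)
  omega

lemma vert_ge_n1 {n a : ℕ} (ha1 : 1 ≤ a) (ha2 : a < n) : n - 1 ≤ a * (n - a) := by
  have := nat_prod_lb1 ha1 (show 1 ≤ n - a by omega)
  omega

lemma vert_ge_2n4 {n a : ℕ} (ha1 : 2 ≤ a) (ha2 : a + 2 ≤ n) : 2 * n - 4 ≤ a * (n - a) := by
  have := nat_prod_lb2 ha1 (show 2 ≤ n - a by omega)
  omega

-- numeric finale helpers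
lemma helperB2adj {n δ d d' : ℕ} (hn : 4 ≤ n) (h1 : δ ≤ d + 1) (h2 : δ ≤ d' + 1) :
    2 * n * δ + 2 * n - 4 ≤ (n - 1) + (n - 1) + (2 * n - 2) + n * d + n * d' := by
  have e1 : n * δ ≤ n * d + n := by
    calc n * δ ≤ n * (d + 1) := Nat.mul_le_mul_left n h1
    _ = n * d + n := by ring
  have e2 : n * δ ≤ n * d' + n := by
    calc n * δ ≤ n * (d' + 1) := Nat.mul_le_mul_left n h2
    _ = n * d' + n := by ring
  have e3 : 2 * n * δ = n * δ + n * δ := by ring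
  omega

lemma helperB2nonadj {n δ d d' : ℕ} (hn : 4 ≤ n) (h1 : δ ≤ d) (h2 : δ ≤ d') :
    2 * n * δ + 2 * n - 4 ≤ (n - 1) + (n - 1) + n * d + n * d' := by
  have e1 : n * δ ≤ n * d := Nat.mul_le_mul_left n h1
  have e2 : n * δ ≤ n * d' := Nat.mul_le_mul_left n h2
  have e3 : 2 * n * δ = n * δ + n * δ := by ring
  omega

lemma helperS1 {n δ p q a₀ : ℕ} (hn : 4 ≤ n) (ha1 : 2 ≤ a₀) (ha2 : a₀ + 2 ≤ n)
    (hδ : δ ≤ p + q) :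
    2 * n * δ + 2 * n - 4 ≤ a₀ * (n - a₀) + p * (n * (n - a₀)) + q * (n * a₀) := by
  have v := vert_ge_2n4 ha1 ha2
  have e1 : p * (n * 2) ≤ p * (n * (n - a₀)) :=
    Nat.mul_le_mul_left p (Nat.mul_le_mul_left n (by omega))
  have e2 : q * (n * 2) ≤ q * (n * a₀) :=
    Nat.mul_le_mul_left q (Nat.mul_le_mul_left n ha1)
  have e3 : 2 * n * δ ≤ 2 * n * (p + q) := Nat.mul_le_mul_left _ hδ
  have e4 : 2 * n * (p + q) = p * (n * 2) + q * (n * 2) := by ring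
  omega

lemma helperS2b {n p q : ℕ} (hn : 4 ≤ n) (hpq : q + 1 ≤ p) :
    2 * n * (p + q) + 2 * n - 4 ≤ (n - 1) + p * (n * (n - 1)) + q * n := by
  obtain ⟨k, rfl⟩ : ∃ k, n = k + 4 := ⟨n - 4, by omega⟩
  have h1 : k + 4 - 1 = k + 3 := by omega
  rw [h1]
  obtain ⟨r, rfl⟩ : ∃ r, p = q + 1 + r := ⟨p - (q+1), by omega⟩
  rw [Nat.sub_le_iff_le_add]
  nlinarith [Nat.zero_le (q*k), Nat.zero_le (r*k)]

lemma helperS2a {n p q c lam : ℕ} (hn : 4 ≤ n) (hqp : p ≤ q) (hlam : lam ≤ p + c) :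
    n ^ 2 * lam ≤ (n - 1) + p * (n * (n - 1)) + q * n + c * (n ^ 2) := by
  have key : n * (n - 1) + n = n ^ 2 := by
    obtain ⟨k, rfl⟩ : ∃ k, n = k + 4 := ⟨n - 4, by omega⟩
    have h1 : k + 4 - 1 = k + 3 := by omega
    rw [h1]; ring
  have e1 : n ^ 2 * lam ≤ n ^ 2 * (p + c) := Nat.mul_le_mul_left _ hlam
  have e2 : n ^ 2 * (p + c) = p * (n * (n-1)) + p * n + c * n ^ 2 := by
    rw [← key]; ring
  have e3 : p * n ≤ q * n := Nat.mul_le_mul_right n hqp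
  omega

lemma helperS3a {n p q c lam : ℕ} (hn : 4 ≤ n) (hqp : q ≤ p) (hlam : lam ≤ q + c) :
    n ^ 2 * lam ≤ (n - 1) + p * n + q * (n * (n - 1)) + c * (n ^ 2) := by
  have := helperS2a (q := p) (p := q) (c := c) (lam := lam) hn hqp hlam
  omega

section Arith
variable {V : Type*} [Fintype V]

lemma deg_eq_card_filter (G : SimpleGraph V) (x : V) :
    deg G x = (Finset.univ.filter fun y => G.Adj x y).card := by
  rw [deg, show G.neighborSet x = {y | G.Adj x y} from rfl, Set.ncard_eq_toFinset_card']
  simp [Set.toFinset_setOf]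

lemma sum_split2 {s : Finset V} (f : V → ℕ) {x x' : V} (hx : x ∈ s) (hx' : x' ∈ s)
    (hne : x ≠ x') : ∑ z ∈ s, f z = f x + f x' + ∑ z ∈ (s.erase x).erase x', f z := by
  rw [← Finset.add_sum_erase s f hx,
    ← Finset.add_sum_erase _ f (Finset.mem_erase.2 ⟨hne.symm, hx'⟩)]
  ring

lemma arith_main (G : SimpleGraph V) (n : ℕ) (hn : 4 ≤ n)
    (a : V → ℕ) (ha : ∀ x, a x ≤ n)
    (h1 : ∃ x, 1 ≤ a x) (h2 : ∃ x, a x < n)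
    (hc1 : ∀ x, 1 ≤ a x → 2 ≤ a x ∨ ∃ y, G.Adj x y ∧ 1 ≤ a y)
    (hc2 : ∀ x, a x < n → a x + 2 ≤ n ∨ ∃ y, G.Adj x y ∧ a y < n) :
    min (n ^ 2 * edgeConn G) (2 * n * minDeg G + 2 * n - 4)
      ≤ ∑ x : V, ∑ y : V, kf G n a x y := by
  by_cases hBe : ∀ x, a x = 0 ∨ a x = n
  · obtain ⟨x1, hx1⟩ := h1
    obtain ⟨x2, hx2⟩ := h2
    set A : Set V := {x | a x = n} with hA
    have hx1A : x1 ∈ A := by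
      rcases hBe x1 with h | h
      · omega
      · exact h
    have hx2A : x2 ∈ Aᶜ := by
      intro hmem
      rw [hA, Set.mem_setOf_eq] at hmem
      omega
    have hcut : edgeConn G ≤
        (Finset.univ.filter fun p : V × V => p.1 ∈ A ∧ p.2 ∉ A ∧ G.Adj p.1 p.2).card :=
      (edgeConn_le_ncard_edgesBetween ⟨x1, hx1A⟩ ⟨x2, hx2A⟩).trans
        (le_of_eq (by convert ncard_edgesBetween_compl G A using 2; congr!))
    set Q := (Finset.univ.filter fun p : V × V => p.1 ∈ A ∧ p.2 ∉ A ∧ G.Adj p.1 p.2) with hQ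
    have hsum : n ^ 2 * Q.card ≤ ∑ x : V, ∑ y : V, kf G n a x y := by
      have hterm : ∀ p ∈ Q, (n ^ 2 : ℕ) ≤ kf G n a p.1 p.2 := by
        rintro ⟨u, v⟩ hp
        simp only [hQ, Finset.mem_filter, Finset.mem_univ, true_and] at hp
        obtain ⟨hu, hv, hadj⟩ := hp
        have hau : a u = n := hu
        have hav : a v = 0 := by
          rcases hBe v with h | h
          · exact h
          · exact absurd h hv
        have hkv : kf G n a u v = n * n := by
          rw [kf, if_neg hadj.ne, if_pos hadj, hau, hav, Nat.sub_zero]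
        rw [hkv, pow_two]
      calc n ^ 2 * Q.card = ∑ _p ∈ Q, (n ^ 2 : ℕ) := by
            rw [Finset.sum_const, smul_eq_mul, mul_comm]
      _ ≤ ∑ p ∈ Q, kf G n a p.1 p.2 := Finset.sum_le_sum hterm
      _ ≤ ∑ p ∈ Finset.univ ×ˢ Finset.univ, kf G n a p.1 p.2 :=
          Finset.sum_le_sum_of_subset (by rw [Finset.univ_product_univ]; exact Finset.subset_univ _)
      _ = ∑ x : V, ∑ y : V, kf G n a x y := Finset.sum_product' _ _ _
    exact le_trans (min_le_left _ _) (le_trans (Nat.mul_le_mul_left _ hcut) hsum)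
  · push_neg at hBe
    obtain ⟨x₀, hx₀⟩ := hBe
    have hx₀1 : 1 ≤ a x₀ := by omega
    have hx₀2 : a x₀ < n := lt_of_le_of_ne (ha x₀) hx₀.2
    by_cases hB2 : ∃ x', x' ≠ x₀ ∧ 1 ≤ a x' ∧ a x' < n
    · obtain ⟨x', hne, hx'1, hx'2⟩ := hB2
      refine le_trans (min_le_right _ _) ?_
      set NF : V → Finset V := fun x => Finset.univ.filter fun y => G.Adj x y with hNF
      have hdeg : ∀ x, deg G x = (NF x).card := fun x => deg_eq_card_filter G x
      set E2 := (Finset.univ.erase x₀).erase x' with hE2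
      have hFsplit : ∑ x : V, ∑ y : V, kf G n a x y
          = (∑ y : V, kf G n a x₀ y) + (∑ y : V, kf G n a x' y)
            + ∑ z ∈ E2, ∑ y : V, kf G n a z y :=
        sum_split2 _ (Finset.mem_univ _) (Finset.mem_univ _) hne.symm
      have hrow : ∀ w : V, (∑ y : V, kf G n a w y)
          = kf G n a w x₀ + kf G n a w x' + ∑ y ∈ E2, kf G n a w y :=
        fun w => sum_split2 _ (Finset.mem_univ _) (Finset.mem_univ _) hne.symm
      have hzsum : ∑ z ∈ E2, (kf G n a z x₀ + kf G n a z x') ≤ ∑ z ∈ E2, ∑ y : V, kf G n a z y := by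
        refine Finset.sum_le_sum fun z _ => ?_
        calc kf G n a z x₀ + kf G n a z x'
            = ∑ y ∈ ({x₀, x'} : Finset V), kf G n a z y := by
              rw [Finset.sum_pair hne.symm]
        _ ≤ _ := Finset.sum_le_sum_of_subset (Finset.subset_univ _)
      have hcore : kf G n a x₀ x₀ + kf G n a x' x' + (kf G n a x₀ x' + kf G n a x' x₀)
          + (∑ y ∈ E2, (kf G n a x₀ y + kf G n a y x₀))
          + (∑ y ∈ E2, (kf G n a x' y + kf G n a y x'))
          ≤ ∑ x : V, ∑ y : V, kf G n a x y := by
        rw [hFsplit, hrow x₀, hrow x']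
        have e1 : ∑ y ∈ E2, (kf G n a x₀ y + kf G n a y x₀)
            = ∑ y ∈ E2, kf G n a x₀ y + ∑ y ∈ E2, kf G n a y x₀ := Finset.sum_add_distrib
        have e2 : ∑ y ∈ E2, (kf G n a x' y + kf G n a y x')
            = ∑ y ∈ E2, kf G n a x' y + ∑ y ∈ E2, kf G n a y x' := Finset.sum_add_distrib
        have e3 : ∑ z ∈ E2, (kf G n a z x₀ + kf G n a z x')
            = ∑ z ∈ E2, kf G n a z x₀ + ∑ z ∈ E2, kf G n a z x' := Finset.sum_add_distrib
        omega
      have hpairgen : ∀ w : V, 1 ≤ a w → a w < n → ∀ y, G.Adj w y →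
          n ≤ kf G n a w y + kf G n a y w := by
        intro w hw1 hw2 y hadj
        have h1 : kf G n a w y = a w * (n - a y) := by rw [kf, if_neg hadj.ne, if_pos hadj]
        have h2 : kf G n a y w = a y * (n - a w) := by rw [kf, if_neg hadj.ne', if_pos hadj.symm]
        rw [h1, h2]
        exact pair_ge_n hw1 hw2 (ha y)
      have hsubgen : ∀ w w' : V, (NF w).erase w' ⊆ (Finset.univ.erase w).erase w' := by
        intro w w' y hy
        rw [Finset.mem_erase] at hy
        obtain ⟨hyw', hyN⟩ := hy
        have hadj : G.Adj w y := by
          have := Finset.mem_filter.1 hyN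
          exact this.2
        exact Finset.mem_erase.2 ⟨hyw', Finset.mem_erase.2 ⟨hadj.ne', Finset.mem_univ _⟩⟩
      have hsumgen : ∀ w w' : V, 1 ≤ a w → a w < n →
          n * ((NF w).erase w').card ≤
            ∑ y ∈ (Finset.univ.erase w).erase w', (kf G n a w y + kf G n a y w) := by
        intro w w' hw1 hw2
        calc n * ((NF w).erase w').card = ∑ _y ∈ (NF w).erase w', n := by
              rw [Finset.sum_const, smul_eq_mul, mul_comm]
        _ ≤ ∑ y ∈ (NF w).erase w', (kf G n a w y + kf G n a y w) := by
            refine Finset.sum_le_sum fun y hy => ?_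
            have hadj : G.Adj w y := (Finset.mem_filter.1 (Finset.mem_of_mem_erase hy)).2
            exact hpairgen w hw1 hw2 y hadj
        _ ≤ _ := Finset.sum_le_sum_of_subset (hsubgen w w')
      have hsum1 := hsumgen x₀ x' hx₀1 hx₀2
      have hsum2' := hsumgen x' x₀ hx'1 hx'2
      have hE2' : (Finset.univ.erase x').erase x₀ = E2 := by
        rw [hE2, Finset.erase_right_comm]
      rw [hE2'] at hsum2'
      have hv0 : n - 1 ≤ kf G n a x₀ x₀ := by
        rw [kf, if_pos rfl]; exact vert_ge_n1 hx₀1 hx₀2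
      have hv1 : n - 1 ≤ kf G n a x' x' := by
        rw [kf, if_pos rfl]; exact vert_ge_n1 hx'1 hx'2
      have hδ1 : minDeg G ≤ deg G x₀ := minDeg_le G x₀
      have hδ2 : minDeg G ≤ deg G x' := minDeg_le G x'
      by_cases hadj : G.Adj x₀ x'
      · have hp : 2 * n - 2 ≤ kf G n a x₀ x' + kf G n a x' x₀ := by
          have h1 : kf G n a x₀ x' = a x₀ * (n - a x') := by rw [kf, if_neg hne.symm, if_pos hadj]
          have h2 : kf G n a x' x₀ = a x' * (n - a x₀) := by rw [kf, if_neg hne, if_pos hadj.symm]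
          rw [h1, h2]; exact pair_ge_2n2 hx₀1 hx₀2 hx'1 hx'2
        have hd1 : 1 ≤ deg G x₀ := by
          rw [hdeg]
          exact Finset.card_pos.2 ⟨x', Finset.mem_filter.2 ⟨Finset.mem_univ _, hadj⟩⟩
        have hd1' : 1 ≤ deg G x' := by
          rw [hdeg]
          exact Finset.card_pos.2 ⟨x₀, Finset.mem_filter.2 ⟨Finset.mem_univ _, hadj.symm⟩⟩
        have hcard1 : deg G x₀ - 1 ≤ ((NF x₀).erase x').card := by
          rw [hdeg x₀]; exact Finset.pred_card_le_card_erase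
        have hcard2 : deg G x' - 1 ≤ ((NF x').erase x₀).card := by
          rw [hdeg x']; exact Finset.pred_card_le_card_erase
        have hm1 : n * (deg G x₀ - 1) ≤ ∑ y ∈ E2, (kf G n a x₀ y + kf G n a y x₀) :=
          le_trans (Nat.mul_le_mul_left n hcard1) hsum1
        have hm2 : n * (deg G x' - 1) ≤ ∑ y ∈ E2, (kf G n a x' y + kf G n a y x') :=
          le_trans (Nat.mul_le_mul_left n hcard2) hsum2'
        have hnum := helperB2adj (n := n) (δ := minDeg G) (d := deg G x₀ - 1)
          (d' := deg G x' - 1) hn (by omega) (by omega)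
        omega
      · have hp : kf G n a x₀ x' = 0 ∧ kf G n a x' x₀ = 0 := by
          constructor
          · rw [kf, if_neg hne.symm, if_neg hadj]
          · rw [kf, if_neg hne, if_neg (fun h => hadj h.symm)]
        have hxnot : x' ∉ NF x₀ := by
          intro h; exact hadj (Finset.mem_filter.1 h).2
        have hxnot' : x₀ ∉ NF x' := by
          intro h; exact hadj ((Finset.mem_filter.1 h).2).symm
        have hcard1 : deg G x₀ ≤ ((NF x₀).erase x').card := by
          rw [Finset.erase_eq_of_notMem hxnot, hdeg x₀]
        have hcard2 : deg G x' ≤ ((NF x').erase x₀).card := by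
          rw [Finset.erase_eq_of_notMem hxnot', hdeg x']
        have hm1 : n * deg G x₀ ≤ ∑ y ∈ E2, (kf G n a x₀ y + kf G n a y x₀) :=
          le_trans (Nat.mul_le_mul_left n hcard1) hsum1
        have hm2 : n * deg G x' ≤ ∑ y ∈ E2, (kf G n a x' y + kf G n a y x') :=
          le_trans (Nat.mul_le_mul_left n hcard2) hsum2'
        have hnum := helperB2nonadj (n := n) (δ := minDeg G) (d := deg G x₀)
          (d' := deg G x') hn hδ1 hδ2
        omega
    · push_neg at hB2
      have hB1 : ∀ y, y ≠ x₀ → a y = 0 ∨ a y = n := by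
        intro y hy
        rcases Nat.eq_zero_or_pos (a y) with h | h
        · exact Or.inl h
        · exact Or.inr (le_antisymm (ha y) (hB2 y hy h))
      set NF := Finset.univ.filter (fun y => G.Adj x₀ y) with hNF
      set An := Finset.univ.filter (fun y => y ≠ x₀ ∧ a y = n) with hAn
      set Zs := Finset.univ.filter (fun y => y ≠ x₀ ∧ a y = 0) with hZs
      set p := (NF ∩ An).card with hpdef
      set q := (NF ∩ Zs).card with hqdef
      set S1 := (NF ∩ An).image (fun y => (y, x₀)) with hS1
      set S2 := (NF ∩ Zs).image (fun z => ((x₀ : V), z)) with hS2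
      set S3 := (An ×ˢ Zs).filter (fun pr => G.Adj pr.1 pr.2) with hS3
      set c := S3.card with hcdef
      have memS1 : ∀ pr : V × V, pr ∈ S1 → pr.2 = x₀ ∧ pr.1 ≠ x₀ ∧ G.Adj x₀ pr.1 ∧ a pr.1 = n := by
        rintro ⟨u, v⟩ h
        rw [hS1, Finset.mem_image] at h
        obtain ⟨y, hy, hyEq⟩ := h
        obtain ⟨hyN, hyA⟩ := Finset.mem_inter.1 hy
        cases hyEq
        exact ⟨rfl, (Finset.mem_filter.1 hyA).2.1, (Finset.mem_filter.1 hyN).2,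
          (Finset.mem_filter.1 hyA).2.2⟩
      have memS2 : ∀ pr : V × V, pr ∈ S2 → pr.1 = x₀ ∧ pr.2 ≠ x₀ ∧ G.Adj x₀ pr.2 ∧ a pr.2 = 0 := by
        rintro ⟨u, v⟩ h
        rw [hS2, Finset.mem_image] at h
        obtain ⟨z, hz, hzEq⟩ := h
        obtain ⟨hzN, hzZ⟩ := Finset.mem_inter.1 hz
        cases hzEq
        exact ⟨rfl, (Finset.mem_filter.1 hzZ).2.1, (Finset.mem_filter.1 hzN).2,
          (Finset.mem_filter.1 hzZ).2.2⟩
      have memS3 : ∀ pr : V × V, pr ∈ S3 →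
          pr.1 ≠ x₀ ∧ pr.2 ≠ x₀ ∧ a pr.1 = n ∧ a pr.2 = 0 ∧ G.Adj pr.1 pr.2 := by
        rintro ⟨u, v⟩ h
        rw [hS3, Finset.mem_filter, Finset.mem_product] at h
        obtain ⟨⟨hu, hv⟩, hadj⟩ := h
        exact ⟨(Finset.mem_filter.1 hu).2.1, (Finset.mem_filter.1 hv).2.1,
          (Finset.mem_filter.1 hu).2.2, (Finset.mem_filter.1 hv).2.2, hadj⟩
      have d12 : Disjoint S1 S2 := by
        rw [Finset.disjoint_left]
        intro pr h1 h2
        exact (memS1 pr h1).2.1 ((memS2 pr h2).1)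
      have d123 : Disjoint (S1 ∪ S2) S3 := by
        rw [Finset.disjoint_left]
        intro pr h1 h3
        rcases Finset.mem_union.1 h1 with h | h
        · exact (memS3 pr h3).2.1 ((memS1 pr h).1)
        · exact (memS3 pr h3).1 ((memS2 pr h).1)
      have hnotin : ((x₀ : V), (x₀ : V)) ∉ S1 ∪ S2 ∪ S3 := by
        intro h
        rcases Finset.mem_union.1 h with h | h
        · rcases Finset.mem_union.1 h with h | h
          · exact (memS1 _ h).2.1 rfl
          · exact (memS2 _ h).2.1 rfl
        · exact (memS3 _ h).1 rfl
      have hS1sum : ∑ pr ∈ S1, kf G n a pr.1 pr.2 = p * (n * (n - a x₀)) := by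
        rw [hS1, Finset.sum_image (by intro y _ z _ h; exact (Prod.ext_iff.1 h).1)]
        have hterm : ∀ y ∈ NF ∩ An, kf G n a y x₀ = n * (n - a x₀) := by
          intro y hy
          obtain ⟨hyN, hyA⟩ := Finset.mem_inter.1 hy
          have hadj : G.Adj x₀ y := (Finset.mem_filter.1 hyN).2
          rw [kf, if_neg hadj.ne', if_pos hadj.symm, (Finset.mem_filter.1 hyA).2.2]
        rw [Finset.sum_congr rfl hterm, Finset.sum_const, smul_eq_mul]
      have hS2sum : ∑ pr ∈ S2, kf G n a pr.1 pr.2 = q * (a x₀ * n) := by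
        rw [hS2, Finset.sum_image (by intro y _ z _ h; exact (Prod.ext_iff.1 h).2)]
        have hterm : ∀ z ∈ NF ∩ Zs, kf G n a x₀ z = a x₀ * n := by
          intro z hz
          obtain ⟨hzN, hzZ⟩ := Finset.mem_inter.1 hz
          have hadj : G.Adj x₀ z := (Finset.mem_filter.1 hzN).2
          rw [kf, if_neg hadj.ne, if_pos hadj, (Finset.mem_filter.1 hzZ).2.2, Nat.sub_zero]
        rw [Finset.sum_congr rfl hterm, Finset.sum_const, smul_eq_mul]
      have hS3sum : ∑ pr ∈ S3, kf G n a pr.1 pr.2 = c * (n * n) := by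
        have hterm : ∀ pr ∈ S3, kf G n a pr.1 pr.2 = n * n := by
          intro pr hpr
          obtain ⟨_, _, hu, hv, hadj⟩ := memS3 pr hpr
          rw [kf, if_neg hadj.ne, if_pos hadj, hu, hv, Nat.sub_zero]
        rw [Finset.sum_congr rfl hterm, Finset.sum_const, smul_eq_mul]
      have hkxx : kf G n a x₀ x₀ = a x₀ * (n - a x₀) := by rw [kf, if_pos rfl]
      have hQsum : a x₀ * (n - a x₀) + p * (n * (n - a x₀)) + q * (a x₀ * n) + c * (n * n)
          ≤ ∑ x : V, ∑ y : V, kf G n a x y := by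
        have hQeq : ∑ pr ∈ insert ((x₀ : V), (x₀ : V)) (S1 ∪ S2 ∪ S3), kf G n a pr.1 pr.2
            = a x₀ * (n - a x₀) + p * (n * (n - a x₀)) + q * (a x₀ * n) + c * (n * n) := by
          rw [Finset.sum_insert hnotin, Finset.sum_union d123, Finset.sum_union d12,
            hkxx, hS1sum, hS2sum, hS3sum]
          ring
        calc a x₀ * (n - a x₀) + p * (n * (n - a x₀)) + q * (a x₀ * n) + c * (n * n)
            = ∑ pr ∈ insert ((x₀ : V), (x₀ : V)) (S1 ∪ S2 ∪ S3), kf G n a pr.1 pr.2 := hQeq.symm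
        _ ≤ ∑ pr ∈ Finset.univ ×ˢ Finset.univ, kf G n a pr.1 pr.2 :=
            Finset.sum_le_sum_of_subset
              (by rw [Finset.univ_product_univ]; exact Finset.subset_univ _)
        _ = ∑ x : V, ∑ y : V, kf G n a x y := Finset.sum_product' _ _ _
      have hdegsplit : deg G x₀ = p + q := by
        have hun : NF = (NF ∩ An) ∪ (NF ∩ Zs) := by
          ext y
          constructor
          · intro hy
            have hadj : G.Adj x₀ y := by
              rw [hNF, Finset.mem_filter] at hy; exact hy.2
            rcases hB1 y hadj.ne' with h0 | hn'
            · refine Finset.mem_union_right _ (Finset.mem_inter.2 ⟨hy, ?_⟩)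
              rw [hZs, Finset.mem_filter]
              exact ⟨Finset.mem_univ _, hadj.ne', h0⟩
            · refine Finset.mem_union_left _ (Finset.mem_inter.2 ⟨hy, ?_⟩)
              rw [hAn, Finset.mem_filter]
              exact ⟨Finset.mem_univ _, hadj.ne', hn'⟩
          · intro hy
            rcases Finset.mem_union.1 hy with h | h
            · exact (Finset.mem_inter.1 h).1
            · exact (Finset.mem_inter.1 h).1
        have hdisj : Disjoint (NF ∩ An) (NF ∩ Zs) := by
          rw [Finset.disjoint_left]
          intro y hy1 hy2
          have e1 : a y = n := by
            have hh := (Finset.mem_inter.1 hy1).2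
            rw [hAn, Finset.mem_filter] at hh; exact hh.2.2
          have e2 : a y = 0 := by
            have hh := (Finset.mem_inter.1 hy2).2
            rw [hZs, Finset.mem_filter] at hh; exact hh.2.2
          omega
        rw [deg_eq_card_filter, ← hNF, hun, Finset.card_union_of_disjoint hdisj]
      have hδ : minDeg G ≤ p + q := hdegsplit ▸ minDeg_le G x₀
      have hlamA : 1 ≤ p → edgeConn G ≤ p + c := by
        intro hp1
        obtain ⟨y₀, hy₀⟩ := Finset.card_pos.1 hp1
        have hAne : ((↑An : Set V)).Nonempty := ⟨y₀, (Finset.mem_inter.1 hy₀).2⟩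
        have hAcne : ((↑An : Set V)ᶜ).Nonempty := by
          refine ⟨x₀, fun hmem => ?_⟩
          rw [Finset.mem_coe, hAn, Finset.mem_filter] at hmem
          exact hmem.2.1 rfl
        have hle := edgeConn_le_ncard_edgesBetween (H := G) hAne hAcne
        have hcard : (edgesBetween G (↑An) (↑An : Set V)ᶜ).ncard
            = (Finset.univ.filter fun pr : V × V =>
                pr.1 ∈ (↑An : Set V) ∧ pr.2 ∉ (↑An : Set V) ∧ G.Adj pr.1 pr.2).card := by
          convert ncard_edgesBetween_compl G (↑An) using 2
          congr!
        have hsub : (Finset.univ.filter fun pr : V × V =>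
            pr.1 ∈ (↑An : Set V) ∧ pr.2 ∉ (↑An : Set V) ∧ G.Adj pr.1 pr.2) ⊆ S1 ∪ S3 := by
          rintro ⟨u, w⟩ hpr
          rw [Finset.mem_filter] at hpr
          obtain ⟨-, huA', hwA', hadj⟩ := hpr
          have huA : u ∈ An := Finset.mem_coe.1 huA'
          have hwA : w ∉ An := fun hm => hwA' (Finset.mem_coe.2 hm)
          rcases eq_or_ne w x₀ with rfl | hwx
          · refine Finset.mem_union_left _ ?_
            rw [hS1, Finset.mem_image]
            refine ⟨u, Finset.mem_inter.2 ⟨?_, huA⟩, rfl⟩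
            rw [hNF, Finset.mem_filter]
            exact ⟨Finset.mem_univ _, hadj.symm⟩
          · refine Finset.mem_union_right _ ?_
            have hwZ : w ∈ Zs := by
              rw [hZs, Finset.mem_filter]
              rcases hB1 w hwx with h0 | hn'
              · exact ⟨Finset.mem_univ _, hwx, h0⟩
              · exfalso
                exact hwA (by rw [hAn, Finset.mem_filter]; exact ⟨Finset.mem_univ _, hwx, hn'⟩)
            rw [hS3, Finset.mem_filter, Finset.mem_product]
            exact ⟨⟨huA, hwZ⟩, hadj⟩
        calc edgeConn G ≤ _ := hle
        _ = _ := hcard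
        _ ≤ (S1 ∪ S3).card := Finset.card_le_card hsub
        _ ≤ S1.card + S3.card := Finset.card_union_le _ _
        _ ≤ p + c := by
          refine Nat.add_le_add ?_ le_rfl
          rw [hS1, hpdef]
          exact Finset.card_image_le
      have hswap : ((Zs ×ˢ An).filter fun pr => G.Adj pr.1 pr.2).card = c := by
        rw [hcdef, hS3]
        apply Finset.card_bij (fun pr _ => Prod.swap pr)
        · rintro ⟨z, y⟩ hpr
          rw [Finset.mem_filter, Finset.mem_product] at hpr ⊢
          exact ⟨⟨hpr.1.2, hpr.1.1⟩, hpr.2.symm⟩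
        · rintro ⟨z, y⟩ h1 ⟨z', y'⟩ h2 hEq
          exact Prod.swap_injective hEq
        · rintro ⟨y, z⟩ hpr
          refine ⟨(z, y), ?_, rfl⟩
          rw [Finset.mem_filter, Finset.mem_product] at hpr ⊢
          exact ⟨⟨hpr.1.2, hpr.1.1⟩, hpr.2.symm⟩
      have hlamZ : 1 ≤ q → edgeConn G ≤ q + c := by
        intro hq1
        obtain ⟨z₀, hz₀⟩ := Finset.card_pos.1 hq1
        have hZne : ((↑Zs : Set V)).Nonempty := ⟨z₀, (Finset.mem_inter.1 hz₀).2⟩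
        have hZcne : ((↑Zs : Set V)ᶜ).Nonempty := by
          refine ⟨x₀, fun hmem => ?_⟩
          rw [Finset.mem_coe, hZs, Finset.mem_filter] at hmem
          exact hmem.2.1 rfl
        have hle := edgeConn_le_ncard_edgesBetween (H := G) hZne hZcne
        have hcard : (edgesBetween G (↑Zs) (↑Zs : Set V)ᶜ).ncard
            = (Finset.univ.filter fun pr : V × V =>
                pr.1 ∈ (↑Zs : Set V) ∧ pr.2 ∉ (↑Zs : Set V) ∧ G.Adj pr.1 pr.2).card := by
          convert ncard_edgesBetween_compl G (↑Zs) using 2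
          congr!
        have hsub : (Finset.univ.filter fun pr : V × V =>
            pr.1 ∈ (↑Zs : Set V) ∧ pr.2 ∉ (↑Zs : Set V) ∧ G.Adj pr.1 pr.2) ⊆
              ((NF ∩ Zs).image (fun z => (z, x₀))) ∪ ((Zs ×ˢ An).filter fun pr => G.Adj pr.1 pr.2) := by
          rintro ⟨u, w⟩ hpr
          rw [Finset.mem_filter] at hpr
          obtain ⟨-, huZ', hwZ', hadj⟩ := hpr
          have huZ : u ∈ Zs := Finset.mem_coe.1 huZ'
          have hwZ : w ∉ Zs := fun hm => hwZ' (Finset.mem_coe.2 hm)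
          rcases eq_or_ne w x₀ with rfl | hwx
          · refine Finset.mem_union_left _ ?_
            rw [Finset.mem_image]
            refine ⟨u, Finset.mem_inter.2 ⟨?_, huZ⟩, rfl⟩
            rw [hNF, Finset.mem_filter]
            exact ⟨Finset.mem_univ _, hadj.symm⟩
          · refine Finset.mem_union_right _ ?_
            have hwA : w ∈ An := by
              rw [hAn, Finset.mem_filter]
              rcases hB1 w hwx with h0 | hn'
              · exfalso
                exact hwZ (by rw [hZs, Finset.mem_filter]; exact ⟨Finset.mem_univ _, hwx, h0⟩)
              · exact ⟨Finset.mem_univ _, hwx, hn'⟩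
            rw [Finset.mem_filter, Finset.mem_product]
            exact ⟨⟨huZ, hwA⟩, hadj⟩
        calc edgeConn G ≤ _ := hle
        _ = _ := hcard
        _ ≤ _ := Finset.card_le_card hsub
        _ ≤ ((NF ∩ Zs).image (fun z => (z, x₀))).card
              + ((Zs ×ˢ An).filter fun pr => G.Adj pr.1 pr.2).card := Finset.card_union_le _ _
        _ ≤ q + c := by
          rw [hswap, hqdef]
          exact Nat.add_le_add Finset.card_image_le le_rfl
      rcases eq_or_ne (a x₀) 1 with ha1 | hane1
      · have hp1 : 1 ≤ p := by
          rcases hc1 x₀ hx₀1 with h2a | ⟨y, hadj, hy1⟩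
          · omega
          · have hyA : y ∈ NF ∩ An := by
              refine Finset.mem_inter.2 ⟨?_, ?_⟩
              · rw [hNF, Finset.mem_filter]; exact ⟨Finset.mem_univ _, hadj⟩
              · rw [hAn, Finset.mem_filter]
                rcases hB1 y hadj.ne' with h0 | hn'
                · omega
                · exact ⟨Finset.mem_univ _, hadj.ne', hn'⟩
            rw [hpdef]
            exact Finset.card_pos.2 ⟨y, hyA⟩
        by_cases hpq : p ≤ q
        · refine le_trans (min_le_left _ _) ?_
          have hnum := helperS2a (n := n) (p := p) (q := q) (c := c) hn hpq (hlamA hp1)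
          have hshape : a x₀ * (n - a x₀) + p * (n * (n - a x₀)) + q * (a x₀ * n) + c * (n * n)
              = (n - 1) + p * (n * (n - 1)) + q * n + c * (n ^ 2) := by
            rw [ha1]; ring
          omega
        · refine le_trans (min_le_right _ _) ?_
          have hnum := helperS2b (n := n) (p := p) (q := q) hn (by omega)
          have hmul : 2 * n * minDeg G ≤ 2 * n * (p + q) := Nat.mul_le_mul_left _ hδ
          have hshape : a x₀ * (n - a x₀) + p * (n * (n - a x₀)) + q * (a x₀ * n) + c * (n * n)
              = (n - 1) + p * (n * (n - 1)) + q * n + c * (n * n) := by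
            rw [ha1]; ring
          omega
      · rcases eq_or_ne (a x₀) (n - 1) with han1 | hann
        · have hq1 : 1 ≤ q := by
            rcases hc2 x₀ hx₀2 with h2a | ⟨y, hadj, hy1⟩
            · omega
            · have hyZ : y ∈ NF ∩ Zs := by
                refine Finset.mem_inter.2 ⟨?_, ?_⟩
                · rw [hNF, Finset.mem_filter]; exact ⟨Finset.mem_univ _, hadj⟩
                · rw [hZs, Finset.mem_filter]
                  rcases hB1 y hadj.ne' with h0 | hn'
                  · exact ⟨Finset.mem_univ _, hadj.ne', h0⟩
                  · omega
              rw [hqdef]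
              exact Finset.card_pos.2 ⟨y, hyZ⟩
          have hsub1 : n - (n - 1) = 1 := by omega
          by_cases hqp : q ≤ p
          · refine le_trans (min_le_left _ _) ?_
            have hnum := helperS3a (n := n) (p := p) (q := q) (c := c) hn hqp (hlamZ hq1)
            have hshape : a x₀ * (n - a x₀) + p * (n * (n - a x₀)) + q * (a x₀ * n) + c * (n * n)
                = (n - 1) + p * n + q * (n * (n - 1)) + c * (n ^ 2) := by
              rw [han1, hsub1]; ring
            omega
          · refine le_trans (min_le_right _ _) ?_
            have hnum := helperS2b (n := n) (p := q) (q := p) hn (by omega)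
            have hmul : 2 * n * minDeg G ≤ 2 * n * (p + q) := Nat.mul_le_mul_left _ hδ
            have hcomm : 2 * n * (q + p) = 2 * n * (p + q) := by ring
            have hshape : a x₀ * (n - a x₀) + p * (n * (n - a x₀)) + q * (a x₀ * n) + c * (n * n)
                = (n - 1) + q * (n * (n - 1)) + p * n + c * (n * n) := by
              rw [han1, hsub1]; ring
            omega
        · refine le_trans (min_le_right _ _) ?_
          have ha2 : 2 ≤ a x₀ := by omega
          have han2 : a x₀ + 2 ≤ n := by omega
          have hnum := helperS1 (n := n) (δ := minDeg G) (p := p) (q := q) (a₀ := a x₀)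
            hn ha2 han2 hδ
          have hshape : q * (a x₀ * n) = q * (n * a x₀) := by ring
          omega

end Arith
end REC

namespace REC
section Glue
variable {V : Type*} [Fintype V] {n : ℕ}

lemma lower_bound (G : SimpleGraph V) (hn : 4 ≤ n) [Nonempty V]
    {S : Set (Sym2 (V × Fin n))}
    (hS : IsRestrictedEdgeCut (strongProd G (completeGraph (Fin n))) S) :
    min (n ^ 2 * edgeConn G) (2 * n * minDeg G + 2 * n - 4) ≤ S.ncard := by
  obtain ⟨hsub, hdisc, hsupp⟩ := hS
  set P := strongProd G (completeGraph (Fin n)) with hP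
  have hfne : Nonempty (Fin n) := ⟨⟨0, by omega⟩⟩
  have hnpre : ¬ (P.deleteEdges S).Preconnected := by
    intro h
    exact hdisc ⟨h⟩
  rw [SimpleGraph.Preconnected] at hnpre
  push_neg at hnpre
  obtain ⟨u, v, huv⟩ := hnpre
  set X : Set (V × Fin n) := {w | (P.deleteEdges S).Reachable u w} with hX
  have huX : u ∈ X := Reachable.refl u
  have hvX : v ∉ X := huv
  have hEB : edgesBetween P X Xᶜ ⊆ S := by
    rintro e ⟨heE, w1, hw1, w2, hw2, rfl⟩
    by_contra heS
    have hadj : (P.deleteEdges S).Adj w1 w2 :=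
      SimpleGraph.deleteEdges_adj.2 ⟨P.mem_edgeSet.1 heE, heS⟩
    exact hw2 (Reachable.trans hw1 hadj.reachable)
  have hcard1 : (edgesBetween P X Xᶜ).ncard ≤ S.ncard :=
    Set.ncard_le_ncard hEB (Set.toFinite S)
  have hnb : ∀ w, ∃ w', (P.deleteEdges S).Adj w w' :=
    fun w => exists_adj_of_two_le_supp (hsupp w)
  have hside : ∀ w w', (P.deleteEdges S).Adj w w' → (w ∈ X ↔ w' ∈ X) := by
    intro w w' hadj
    constructor
    · intro hw; exact Reachable.trans hw hadj.reachable
    · intro hw'; exact Reachable.trans hw' hadj.symm.reachable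
  have h1' : ∃ x, 1 ≤ fib X x := ⟨u.1, fib_pos (by rw [Prod.mk.eta]; exact huX)⟩
  have h2' : ∃ x, fib X x < n := by
    refine ⟨v.1, lt_of_le_of_ne (fib_le X v.1) fun hfx => ?_⟩
    exact hvX (by rw [← Prod.mk.eta (p := v)]; exact mem_of_fib_eq hfx v.2)
  have hc1' : ∀ x, 1 ≤ fib X x → 2 ≤ fib X x ∨ ∃ y, G.Adj x y ∧ 1 ≤ fib X y := by
    intro x hx
    obtain ⟨i, hiX⟩ := exists_mem_of_fib_pos hx
    obtain ⟨w', hadj⟩ := hnb (x, i)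
    have hw'X : w' ∈ X := (hside _ _ hadj).1 hiX
    have hPadj : P.Adj (x, i) w' := (SimpleGraph.deleteEdges_adj.1 hadj).1
    rcases (adjP G).1 hPadj with ⟨hfst, hsnd⟩ | hGadj
    · left
      have hw'eq : (x, w'.2) = w' := Prod.ext hfst rfl
      exact fib_two_le hiX (by rw [hw'eq]; exact hw'X) hsnd
    · right
      exact ⟨w'.1, hGadj, fib_pos (by rw [Prod.mk.eta]; exact hw'X)⟩
  have hc2' : ∀ x, fib X x < n → fib X x + 2 ≤ n ∨ ∃ y, G.Adj x y ∧ fib X y < n := by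
    intro x hx
    obtain ⟨i, hi⟩ := exists_not_mem_of_fib_lt hx
    obtain ⟨w', hadj⟩ := hnb (x, i)
    have hw'X : w' ∉ X := fun hmem => hi ((hside _ _ hadj).2 hmem)
    have hPadj : P.Adj (x, i) w' := (SimpleGraph.deleteEdges_adj.1 hadj).1
    rcases (adjP G).1 hPadj with ⟨hfst, hsnd⟩ | hGadj
    · left
      have hw'eq : (x, w'.2) = w' := Prod.ext hfst rfl
      exact fib_add_two_le hi (by rw [hw'eq]; exact hw'X) hsnd
    · right
      refine ⟨w'.1, hGadj, lt_of_le_of_ne (fib_le X w'.1) fun hfx => ?_⟩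
      exact hw'X (by rw [← Prod.mk.eta (p := w')]; exact mem_of_fib_eq hfx w'.2)
  have harith := arith_main G n hn (fib X) (fib_le X) h1' h2' hc1' hc2'
  calc min (n ^ 2 * edgeConn G) (2 * n * minDeg G + 2 * n - 4)
      ≤ ∑ x : V, ∑ y : V, kf G n (fib X) x y := harith
  _ = (edgesBetween P X Xᶜ).ncard := (ncard_EB G X).symm
  _ ≤ S.ncard := hcard1

end Glue
end REC

namespace REC
section Upper0
variable {α : Type*}

lemma mem_edgesBetween_elim {H : SimpleGraph α} {X : Set α} {w w' : α}
    (h : s(w, w') ∈ edgesBetween H X Xᶜ) : (w ∈ X ∧ w' ∉ X) ∨ (w' ∈ X ∧ w ∉ X) := by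
  obtain ⟨-, u, hu, v, hv, he⟩ := h
  rw [Sym2.eq_iff] at he
  rcases he with ⟨rfl, rfl⟩ | ⟨rfl, rfl⟩
  · exact Or.inl ⟨hu, hv⟩
  · exact Or.inr ⟨hu, hv⟩

lemma adj_del_of_same_side {H : SimpleGraph α} {X : Set α} {w w' : α}
    (hadj : H.Adj w w') (h : w ∈ X ↔ w' ∈ X) :
    (H.deleteEdges (edgesBetween H X Xᶜ)).Adj w w' := by
  rw [SimpleGraph.deleteEdges_adj]
  refine ⟨hadj, fun hmem => ?_⟩
  rcases mem_edgesBetween_elim hmem with ⟨h1, h2⟩ | ⟨h1, h2⟩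
  · exact h2 (h.1 h1)
  · exact h2 (h.2 h1)

lemma exists_adj_of_connected {G : SimpleGraph α} [Fintype α] (hG : G.Connected)
    (hm : 2 ≤ Fintype.card α) (x : α) : ∃ y, G.Adj x y := by
  obtain ⟨y, hy⟩ := Fintype.exists_ne_of_one_lt_card (by omega) x
  obtain ⟨p⟩ := hG.preconnected x y
  cases p with
  | nil => exact absurd rfl hy
  | cons h _ => exact ⟨_, h⟩

lemma not_connected_deleteEdges_edgeSet {G : SimpleGraph α} [Fintype α]
    (hm : 2 ≤ Fintype.card α) : ¬ (G.deleteEdges G.edgeSet).Connected := by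
  intro hc
  obtain ⟨x, y, hxy⟩ := Fintype.exists_pair_of_one_lt_card (α := α) (by omega)
  have hiff := reachable_pred_iff (H := G.deleteEdges G.edgeSet) (p := fun z => z = x)
    (fun u v huv => by
      rw [SimpleGraph.deleteEdges_adj] at huv
      exact absurd (G.mem_edgeSet.2 huv.1) huv.2)
    (hc.preconnected x y)
  exact hxy (hiff.1 rfl).symm

lemma exists_min_edge_cut {G : SimpleGraph α} [Fintype α] (hm : 2 ≤ Fintype.card α) :
    ∃ F : Set (Sym2 α), F ⊆ G.edgeSet ∧ F.ncard = edgeConn G ∧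
      ¬ (G.deleteEdges F).Connected := by
  have hne : {k | ∃ S : Set (Sym2 α), S ⊆ G.edgeSet ∧ S.ncard = k ∧
      ¬ (G.deleteEdges S).Connected}.Nonempty :=
    ⟨G.edgeSet.ncard, G.edgeSet, subset_rfl, rfl, not_connected_deleteEdges_edgeSet hm⟩
  obtain ⟨F, h1, h2, h3⟩ := Nat.sInf_mem hne
  exact ⟨F, h1, h2, h3⟩

lemma exists_minDeg_vertex (G : SimpleGraph α) [Nonempty α] :
    ∃ v, minDeg G = deg G v := by
  have hne : {d | ∃ v, d = deg G v}.Nonempty := ⟨deg G (Classical.arbitrary α), _, rfl⟩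
  exact Nat.sInf_mem hne

end Upper0

lemma sum_ite_and' {α β : Type*} [Fintype α] [Fintype β] {p : α → Prop} {q : β → Prop} :
    (∑ i : α, ∑ j : β, if p i ∧ q j then (1 : ℕ) else 0) =
      (Finset.univ.filter p).card * (Finset.univ.filter q).card := by
  rw [Finset.card_filter, Finset.card_filter, Finset.sum_mul_sum]
  congr 1; ext i; congr 1; ext j
  by_cases hp : p i <;> by_cases hq : q j <;> simp [hp, hq]

lemma sum_eq_card_mul {α β : Type*} [Fintype α] [Fintype β] {p : α → Prop} {q : β → Prop}
    {f : α → β → ℕ}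
    (hf : ∀ i j, f i j = (if p i then 1 else 0) * (if q j then 1 else 0)) :
    (∑ i : α, ∑ j : β, f i j) = (Finset.univ.filter p).card * (Finset.univ.filter q).card := by
  rw [Finset.card_filter, Finset.card_filter, Finset.sum_mul_sum]
  exact Finset.sum_congr rfl fun i _ => Finset.sum_congr rfl fun j _ => hf i j

lemma card_filter_iff_or {V : Type*} [Fintype V] (G : SimpleGraph V) (x : V)
    (pred : V → Prop) {instP : DecidablePred pred}
    (hpred : ∀ y, pred y ↔ (x = y ∨ G.Adj x y)) :
    (@Finset.filter _ pred instP Finset.univ).card = 1 + deg G x := by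
  classical
  have h1 : Finset.univ.filter pred = insert x (Finset.univ.filter fun y => G.Adj x y) := by
    ext y
    rw [Finset.mem_filter, Finset.mem_insert, Finset.mem_filter]
    constructor
    · rintro ⟨-, hy⟩
      rcases (hpred y).1 hy with rfl | h
      · exact Or.inl rfl
      · exact Or.inr ⟨Finset.mem_univ _, h⟩
    · rintro (rfl | ⟨-, h⟩)
      · exact ⟨Finset.mem_univ _, (hpred y).2 (Or.inl rfl)⟩
      · exact ⟨Finset.mem_univ _, (hpred y).2 (Or.inr h)⟩
  rw [h1, Finset.card_insert_of_notMem (by simp [G.irrefl]), deg_eq_card_filter]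
  omega

lemma card_filter_iff_ne {n : ℕ} (i₀ : Fin n) (pred : Fin n → Prop)
    {instP : DecidablePred pred} (hpred : ∀ j, pred j ↔ j ≠ i₀) :
    (@Finset.filter _ pred instP Finset.univ).card = n - 1 := by
  classical
  have h1 : Finset.univ.filter pred = Finset.univ.erase i₀ := by
    ext j
    rw [Finset.mem_filter, Finset.mem_erase]
    constructor
    · rintro ⟨-, hj⟩; exact ⟨(hpred j).1 hj, Finset.mem_univ _⟩
    · rintro ⟨hj, -⟩; exact ⟨Finset.mem_univ _, (hpred j).2 hj⟩
  rw [h1, Finset.card_erase_of_mem (Finset.mem_univ _), Finset.card_univ, Fintype.card_fin]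

end REC

namespace REC
section Cuts
variable {V : Type*} [Fintype V] {n : ℕ}

lemma cutA (G : SimpleGraph V) (hm : 2 ≤ Fintype.card V) (hn : 4 ≤ n) :
    ∃ S : Set (Sym2 (V × Fin n)),
      IsRestrictedEdgeCut (strongProd G (completeGraph (Fin n))) S ∧
        S.ncard ≤ n ^ 2 * edgeConn G := by
  haveI : Nonempty V := Fintype.card_pos_iff.1 (by omega)
  obtain ⟨F, hFsub, hFcard, hFdisc⟩ := exists_min_edge_cut (G := G) hm
  set P := strongProd G (completeGraph (Fin n)) with hP
  have hnpre : ¬ (G.deleteEdges F).Preconnected := fun h => hFdisc ⟨h⟩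
  rw [SimpleGraph.Preconnected] at hnpre
  push_neg at hnpre
  obtain ⟨x₁, y₁, hxy⟩ := hnpre
  set R : Set V := {z | (G.deleteEdges F).Reachable x₁ z} with hR
  set X : Set (V × Fin n) := {p | p.1 ∈ R} with hX
  obtain ⟨i₀⟩ : Nonempty (Fin n) := ⟨⟨0, by omega⟩⟩
  refine ⟨edgesBetween P X Xᶜ, ⟨edgesBetween_subset _ _ _, ?_, ?_⟩, ?_⟩
  · exact not_connected_del_edgesBetween ⟨(x₁, i₀), Reachable.refl x₁⟩ ⟨(y₁, i₀), hxy⟩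
  · rintro ⟨x, i⟩
    obtain ⟨j, hj⟩ := Fintype.exists_ne_of_one_lt_card (α := Fin n)
      (by rw [Fintype.card_fin]; omega) i
    refine two_le_ncard_supp (adj_del_of_same_side (w' := (x, j)) ?_ ?_)
    · exact (adjP G).2 (Or.inl ⟨rfl, hj.symm⟩)
    · exact Iff.rfl
  · rw [ncard_edgesBetween_compl P X]
    refine le_trans (Finset.card_le_card_of_injOn
      (t := F.toFinset ×ˢ (Finset.univ : Finset (Fin n × Fin n)))
      (fun pr => (s(pr.1.1, pr.2.1), (pr.1.2, pr.2.2)))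
      ?_ ?_) (le_of_eq ?_)
    · rintro ⟨⟨x, i⟩, ⟨y, j⟩⟩ hpr
      simp only [Finset.mem_coe, Finset.mem_filter] at hpr
      obtain ⟨-, h1, h2, hadj⟩ := hpr
      have hxR : x ∈ R := h1
      have hyR : y ∉ R := h2
      have hGadj : G.Adj x y := by
        rcases (adjP G).1 hadj with ⟨hfst, -⟩ | h
        · exfalso
          apply hyR
          rw [← show x = y from hfst]
          exact hxR
        · exact h
      have hmemF : s(x, y) ∈ F := by
        by_contra hne
        exact hyR (Reachable.trans hxR
          (SimpleGraph.deleteEdges_adj.2 ⟨hGadj, hne⟩).reachable)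
      exact Finset.mem_product.2 ⟨Set.mem_toFinset.2 hmemF, Finset.mem_univ _⟩
    · rintro ⟨⟨x, i⟩, ⟨y, j⟩⟩ hp ⟨⟨x', i'⟩, ⟨y', j'⟩⟩ hq he
      simp only [Finset.mem_coe, Finset.mem_filter] at hp hq
      have he1 : s(x, y) = s(x', y') := congrArg Prod.fst he
      have he2 : i = i' := congrArg (fun t => t.2.1) he
      have he3 : j = j' := congrArg (fun t => t.2.2) he
      rw [Sym2.eq_iff] at he1
      rcases he1 with ⟨rfl, rfl⟩ | ⟨h1, h2⟩
      · rw [he2, he3]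
      · exfalso
        apply hq.2.2.1
        have hxr : x ∈ R := hp.2.1
        rw [h1] at hxr
        exact hxr
    · rw [Finset.card_product, Finset.card_univ, Fintype.card_prod, Fintype.card_fin,
        ← Set.ncard_eq_toFinset_card', hFcard, pow_two]
      ring

lemma cutB (G : SimpleGraph V) (hG : G.Connected) (hm : 2 ≤ Fintype.card V) (hn : 4 ≤ n)
    {m : ℕ} (hmV : Fintype.card V = m) :
    ∃ S : Set (Sym2 (V × Fin n)),
      IsRestrictedEdgeCut (strongProd G (completeGraph (Fin n))) S ∧
        S.ncard ≤ (n - 1) * (m + 2 * numEdges G) := by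
  haveI : Nonempty V := Fintype.card_pos_iff.1 (by omega)
  letI : DecidableRel G.Adj := Classical.decRel _
  set P := strongProd G (completeGraph (Fin n)) with hP
  set i₀ : Fin n := ⟨0, by omega⟩ with hi₀
  set X : Set (V × Fin n) := {p | p.2 = i₀} with hX
  obtain ⟨x⟩ := (inferInstance : Nonempty V)
  have h1ne : (⟨1, by omega⟩ : Fin n) ≠ i₀ := by
    rw [hi₀]; intro h; rw [Fin.mk.injEq] at h; omega
  have h2ne : (⟨2, by omega⟩ : Fin n) ≠ i₀ := by
    rw [hi₀]; intro h; rw [Fin.mk.injEq] at h; omega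
  refine ⟨edgesBetween P X Xᶜ, ⟨edgesBetween_subset _ _ _, ?_, ?_⟩, ?_⟩
  · exact not_connected_del_edgesBetween ⟨(x, i₀), rfl⟩ ⟨(x, ⟨1, by omega⟩), h1ne⟩
  · rintro ⟨z, i⟩
    rcases eq_or_ne i i₀ with rfl | hi
    · obtain ⟨y, hy⟩ := exists_adj_of_connected hG hm z
      refine two_le_ncard_supp (adj_del_of_same_side (w' := (y, i₀)) ?_ ?_)
      · exact (adjP G).2 (Or.inr hy)
      · exact Iff.rfl
    · rcases eq_or_ne i ⟨1, by omega⟩ with rfl | hii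
      · refine two_le_ncard_supp (adj_del_of_same_side (w' := (z, ⟨2, by omega⟩)) ?_ ?_)
        · refine (adjP G).2 (Or.inl ⟨rfl, ?_⟩)
          intro h; rw [Fin.mk.injEq] at h; omega
        · exact iff_of_false hi h2ne
      · refine two_le_ncard_supp (adj_del_of_same_side (w' := (z, ⟨1, by omega⟩)) ?_ ?_)
        · exact (adjP G).2 (Or.inl ⟨rfl, hii⟩)
        · exact iff_of_false hi h1ne
  · rw [ncard_edgesBetween_compl P X]
    have hT : (Finset.univ.filter fun t : V × V × Fin n =>
        (t.1 = t.2.1 ∨ G.Adj t.1 t.2.1) ∧ t.2.2 ≠ i₀).card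
          = (m + 2 * numEdges G) * (n - 1) := by
      rw [Finset.card_filter, Fintype.sum_prod_type]
      have hinner : ∀ x : V,
          (∑ w : V × Fin n, if (x = w.1 ∨ G.Adj x w.1) ∧ w.2 ≠ i₀ then (1:ℕ) else 0)
            = (1 + deg G x) * (n - 1) := by
        intro x
        rw [Fintype.sum_prod_type]
        rw [sum_eq_card_mul (p := fun y => x = y ∨ G.Adj x y) (q := fun j : Fin n => j ≠ i₀)
          (f := fun y j => if (x = y ∨ G.Adj x y) ∧ j ≠ i₀ then (1:ℕ) else 0)
          (by intro i j
              by_cases hc1' : x = i ∨ G.Adj x i <;> by_cases hc2' : j ≠ i₀ <;>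
                simp [hc1', hc2'])]
        congr 1
        · exact card_filter_iff_or G x _ (fun y => Iff.rfl)
        · exact card_filter_iff_ne i₀ _ (fun j => Iff.rfl)
      rw [Finset.sum_congr rfl fun x _ => hinner x, ← Finset.sum_mul]
      congr 1
      rw [Finset.sum_add_distrib, Finset.sum_const, Finset.card_univ, hmV, smul_eq_mul,
        mul_one]
      have hdegsum : ∑ x : V, deg G x = 2 * numEdges G := by
        rw [numEdges_eq,
          show ∑ x : V, deg G x = ∑ x : V, G.degree x from
            Finset.sum_congr rfl fun x _ => deg_eq_degree G x]
        exact SimpleGraph.sum_degrees_eq_twice_card_edges G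
      rw [hdegsum]
    refine le_trans (Finset.card_le_card_of_injOn
      (t := Finset.univ.filter fun t : V × V × Fin n =>
        (t.1 = t.2.1 ∨ G.Adj t.1 t.2.1) ∧ t.2.2 ≠ i₀)
      (fun pr => (pr.1.1, (pr.2.1, pr.2.2))) ?_ ?_) (le_of_eq (by rw [hT, mul_comm]))
    · rintro ⟨⟨z, i⟩, ⟨y, j⟩⟩ hpr
      simp only [Finset.mem_coe, Finset.mem_filter] at hpr ⊢
      obtain ⟨-, hx1, hx2, hadj⟩ := hpr
      have hji : j ≠ i₀ := hx2
      refine ⟨Finset.mem_univ _, ?_, hji⟩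
      rcases (adjP G).1 hadj with ⟨hfst, -⟩ | h
      · exact Or.inl hfst
      · exact Or.inr h
    · rintro ⟨⟨z, i⟩, ⟨y, j⟩⟩ hp ⟨⟨z', i'⟩, ⟨y', j'⟩⟩ hq he
      simp only [Finset.mem_coe, Finset.mem_filter] at hp hq
      have hz : z = z' := congrArg Prod.fst he
      have hy : y = y' := congrArg (fun t => t.2.1) he
      have hj : j = j' := congrArg (fun t => t.2.2) he
      have hii : i = i' := by
        have e1 : i = i₀ := hp.2.1
        have e2 : i' = i₀ := hq.2.1
        rw [e1, e2]
      rw [hz, hy, hj, hii]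

lemma cutC (G : SimpleGraph V) (hm : 2 ≤ Fintype.card V) (hn : 4 ≤ n) :
    ∃ S : Set (Sym2 (V × Fin n)),
      IsRestrictedEdgeCut (strongProd G (completeGraph (Fin n))) S ∧
        S.ncard ≤ 2 * n * minDeg G + 2 * n - 4 := by
  haveI : Nonempty V := Fintype.card_pos_iff.1 (by omega)
  set P := strongProd G (completeGraph (Fin n)) with hP
  obtain ⟨v₀, hv₀⟩ := exists_minDeg_vertex G
  set i₀ : Fin n := ⟨0, by omega⟩ with hi₀
  set i₁ : Fin n := ⟨1, by omega⟩ with hi₁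
  set i₂ : Fin n := ⟨2, by omega⟩ with hi₂
  set i₃ : Fin n := ⟨3, by omega⟩ with hi₃
  have h01 : i₀ ≠ i₁ := by rw [hi₀, hi₁]; intro h; rw [Fin.mk.injEq] at h; omega
  have h2X : i₂ ≠ i₀ ∧ i₂ ≠ i₁ := by
    rw [hi₀, hi₁, hi₂]
    constructor <;> (intro h; rw [Fin.mk.injEq] at h; omega)
  have h3X : i₃ ≠ i₀ ∧ i₃ ≠ i₁ := by
    rw [hi₀, hi₁, hi₃]
    constructor <;> (intro h; rw [Fin.mk.injEq] at h; omega)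
  have h23 : i₂ ≠ i₃ := by rw [hi₂, hi₃]; intro h; rw [Fin.mk.injEq] at h; omega
  set X : Set (V × Fin n) := {p | p = (v₀, i₀) ∨ p = (v₀, i₁)} with hX
  have hmemX : ∀ x i, ((x, i) : V × Fin n) ∈ X ↔ (x = v₀ ∧ (i = i₀ ∨ i = i₁)) := by
    intro x i
    rw [hX, Set.mem_setOf_eq, Prod.mk.injEq, Prod.mk.injEq]
    constructor
    · rintro (⟨h1, h2⟩ | ⟨h1, h2⟩)
      · exact ⟨h1, Or.inl h2⟩
      · exact ⟨h1, Or.inr h2⟩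
    · rintro ⟨h1, h2 | h2⟩
      · exact Or.inl ⟨h1, h2⟩
      · exact Or.inr ⟨h1, h2⟩
  refine ⟨edgesBetween P X Xᶜ, ⟨edgesBetween_subset _ _ _, ?_, ?_⟩, ?_⟩
  · refine not_connected_del_edgesBetween ⟨(v₀, i₀), Or.inl rfl⟩ ⟨(v₀, i₂), ?_⟩
    intro hmem
    rcases (hmemX v₀ i₂).1 hmem with ⟨-, h | h⟩
    · exact h2X.1 h
    · exact h2X.2 h
  · rintro ⟨x, i⟩
    by_cases hwX : ((x, i) : V × Fin n) ∈ X
    · obtain ⟨heq, hi⟩ := (hmemX x i).1 hwX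
      replace heq := heq.symm
      subst heq
      rcases hi with rfl | rfl
      · refine two_le_ncard_supp (adj_del_of_same_side (w' := (v₀, i₁)) ?_ ?_)
        · exact (adjP G).2 (Or.inl ⟨rfl, h01⟩)
        · exact iff_of_true hwX (Or.inr rfl)
      · refine two_le_ncard_supp (adj_del_of_same_side (w' := (v₀, i₀)) ?_ ?_)
        · exact (adjP G).2 (Or.inl ⟨rfl, h01.symm⟩)
        · exact iff_of_true hwX (Or.inl rfl)
    · rcases eq_or_ne x v₀ with heq | hxv
      · replace heq := heq.symm
        subst heq
        have hi01 : i ≠ i₀ ∧ i ≠ i₁ := by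
          constructor <;> (rintro rfl; exact hwX ((hmemX _ _).2 ⟨rfl, by tauto⟩))
        rcases eq_or_ne i i₂ with rfl | hii2
        · refine two_le_ncard_supp (adj_del_of_same_side (w' := (v₀, i₃)) ?_ ?_)
          · exact (adjP G).2 (Or.inl ⟨rfl, h23⟩)
          · refine iff_of_false hwX ?_
            intro hmem
            rcases (hmemX v₀ i₃).1 hmem with ⟨-, h | h⟩
            · exact h3X.1 h
            · exact h3X.2 h
        · refine two_le_ncard_supp (adj_del_of_same_side (w' := (v₀, i₂)) ?_ ?_)
          · exact (adjP G).2 (Or.inl ⟨rfl, hii2⟩)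
          · refine iff_of_false hwX ?_
            intro hmem
            rcases (hmemX v₀ i₂).1 hmem with ⟨-, h | h⟩
            · exact h2X.1 h
            · exact h2X.2 h
      · obtain ⟨j, hj⟩ := Fintype.exists_ne_of_one_lt_card (α := Fin n)
          (by rw [Fintype.card_fin]; omega) i
        refine two_le_ncard_supp (adj_del_of_same_side (w' := (x, j)) ?_ ?_)
        · exact (adjP G).2 (Or.inl ⟨rfl, hj.symm⟩)
        · refine iff_of_false hwX ?_
          intro hmem
          exact hxv ((hmemX x j).1 hmem).1
  · rw [ncard_edgesBetween_compl P X]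
    set NF := Finset.univ.filter (fun y => G.Adj v₀ y) with hNF
    set N : Finset (V × Fin n) :=
      ({v₀} ×ˢ ((Finset.univ.erase i₀).erase i₁)) ∪ (NF ×ˢ Finset.univ) with hN
    refine le_trans (Finset.card_le_card_of_injOn
      (t := ({i₀, i₁} : Finset (Fin n)) ×ˢ N)
      (fun pr => (pr.1.2, pr.2)) ?_ ?_) ?_
    · rintro ⟨⟨x, k⟩, ⟨y, j⟩⟩ hpr
      simp only [Finset.mem_coe, Finset.mem_filter] at hpr
      obtain ⟨-, h1, h2, hadj⟩ := hpr
      obtain ⟨heq, hk⟩ := (hmemX x k).1 h1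
      replace heq := heq.symm
      subst heq
      refine Finset.mem_product.2 ⟨?_, ?_⟩
      · rcases hk with rfl | rfl
        · exact Finset.mem_insert_self _ _
        · exact Finset.mem_insert_of_mem (Finset.mem_singleton_self _)
      · rcases (adjP G).1 hadj with ⟨hfst, -⟩ | hGadj
        · have hyv : v₀ = y := hfst
          subst hyv
          have hj01 : j ≠ i₀ ∧ j ≠ i₁ := by
            constructor <;> (rintro rfl; exact h2 ((hmemX _ _).2 ⟨rfl, by tauto⟩))
          refine Finset.mem_union_left _ (Finset.mem_product.2
            ⟨Finset.mem_singleton_self _, ?_⟩)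
          exact Finset.mem_erase.2 ⟨hj01.2, Finset.mem_erase.2 ⟨hj01.1, Finset.mem_univ _⟩⟩
        · refine Finset.mem_union_right _ (Finset.mem_product.2 ⟨?_, Finset.mem_univ _⟩)
          rw [hNF, Finset.mem_filter]
          exact ⟨Finset.mem_univ _, hGadj⟩
    · rintro ⟨⟨x, k⟩, ⟨y, j⟩⟩ hp ⟨⟨x', k'⟩, ⟨y', j'⟩⟩ hq he
      simp only [Finset.mem_coe, Finset.mem_filter] at hp hq
      have hk : k = k' := congrArg Prod.fst he
      have hw : (⟨y, j⟩ : V × Fin n) = ⟨y', j'⟩ := congrArg Prod.snd he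
      have hx : x = v₀ := ((hmemX x k).1 hp.2.1).1
      have hx' : x' = v₀ := ((hmemX x' k').1 hq.2.1).1
      rw [hx, hx', hk, hw]
    · rw [Finset.card_product, Finset.card_pair h01]
      have hNcard : N.card = (n - 2) + minDeg G * n := by
        rw [hN, Finset.card_union_of_disjoint, Finset.card_product, Finset.card_product,
          Finset.card_singleton, Finset.card_erase_of_mem
            (Finset.mem_erase.2 ⟨h01.symm, Finset.mem_univ _⟩),
          Finset.card_erase_of_mem (Finset.mem_univ _), Finset.card_univ, Fintype.card_fin,
          one_mul, hv₀, deg_eq_card_filter, hNF]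
        · omega
        · rw [Finset.disjoint_left]
          rintro ⟨y, j⟩ hy1 hy2
          have e1 : y = v₀ := by
            have := (Finset.mem_product.1 hy1).1
            exact Finset.mem_singleton.1 this
          have e2 : G.Adj v₀ y := by
            have := (Finset.mem_product.1 hy2).1
            rw [hNF, Finset.mem_filter] at this
            exact this.2
          rw [e1] at e2
          exact G.irrefl e2
      rw [hNcard]
      have hr : 2 * n * minDeg G = 2 * (minDeg G * n) := by ring
      omega

end Cuts
end REC


theorem restEdgeConn_strongProd_completeGraph {V : Type*} [Fintype V]
    (G : SimpleGraph V) (m n : ℕ) (hm : Fintype.card V = m) (hnt : 2 ≤ m)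
    (hG : G.Connected) (hn : 4 ≤ n) :
    restEdgeConn (strongProd G (completeGraph (Fin n))) =
      min (min (n ^ 2 * edgeConn G) ((n - 1) * (m + 2 * numEdges G)))
        (2 * n * minDeg G + 2 * n - 4) := by
  haveI : Nonempty V := Fintype.card_pos_iff.1 (by omega)
  have hm2 : 2 ≤ Fintype.card V := by omega
  obtain ⟨SA, hSA, hSAcard⟩ := REC.cutA (n := n) G hm2 hn
  obtain ⟨SB, hSB, hSBcard⟩ := REC.cutB (n := n) G hG hm2 hn hm
  obtain ⟨SC, hSC, hSCcard⟩ := REC.cutC (n := n) G hm2 hn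
  apply le_antisymm
  · refine le_min (le_min ?_ ?_) ?_
    · exact le_trans (Nat.sInf_le ⟨SA, hSA, rfl⟩) hSAcard
    · exact le_trans (Nat.sInf_le ⟨SB, hSB, rfl⟩) hSBcard
    · exact le_trans (Nat.sInf_le ⟨SC, hSC, rfl⟩) hSCcard
  · refine le_csInf ⟨SC.ncard, SC, hSC, rfl⟩ ?_
    rintro k ⟨S, hS, rfl⟩
    have hlb := REC.lower_bound G hn hS
    calc min (min (n ^ 2 * edgeConn G) ((n - 1) * (m + 2 * numEdges G)))
          (2 * n * minDeg G + 2 * n - 4)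
        ≤ min (n ^ 2 * edgeConn G) (2 * n * minDeg G + 2 * n - 4) :=
          min_le_min (min_le_left _ _) le_rfl
    _ ≤ S.ncard := hlb
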